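/- Let $(\psi_k) \subseteq X_1^*$ be a $p$-Bessel sequence for $X_1$ with bound $B_1$, $(\phi_k) \subseteq X_2$ a $q$-Bessel sequence for $X_2^*$ with bound $B_2$, $r > 0$ and $m \in \ell^r$. Then the multiplier $\mathbf{M}_{m,(\phi_k),(\psi_k)}$ is an $(r,p,q)$-nuclear operator with $N_{(r,p,q)}(\mathbf{M}) \le B_1 B_2 \|m\|_r$. -/

import Mathlib

open scoped ENNReal

/-- If `(ψ k)` is a `p`-Bessel sequence for `X₁` with bound `B₁`, `(φ k)` a `q`-Bessel
sequence for `X₂*` with bound `B₂`, `r > 0` and `m ∈ ℓ^r`, then the multiplier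
`M_{m,(φ k),(ψ k)}` is an `(r,p,q)`-nuclear operator with
`N_{(r,p,q)}(M) ≤ B₁ B₂ ‖m‖_r`: it admits a factorization `M = F ∘ D_m ∘ E` through `ℓᵖ`
with diagonal symbol `m ∈ ℓ^r` and `‖E‖ ‖m‖_r ‖F‖ ≤ B₁ B₂ ‖m‖_r`. -/
theorem multiplier_nuclear {X₁ X₂ : Type*}
    [NormedAddCommGroup X₁] [NormedSpace ℝ X₁] [CompleteSpace X₁]
    [TopologicalSpace.SeparableSpace X₁]
    [NormedAddCommGroup X₂] [NormedSpace ℝ X₂] [CompleteSpace X₂]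
    [TopologicalSpace.SeparableSpace X₂]
    (hrefl₁ : Function.Surjective (NormedSpace.inclusionInDoubleDual ℝ X₁))
    (hrefl₂ : Function.Surjective (NormedSpace.inclusionInDoubleDual ℝ X₂))
    (p q : ℝ≥0∞) [Fact (1 ≤ p)] (hp : 1 < p) (hpt : p ≠ ∞) (hpq : 1 / p + 1 / q = 1)
    (B₁ B₂ r : ℝ) (hB₁ : 0 < B₁) (hB₂ : 0 < B₂) (hr : 0 < r)
    (ψ : ℕ → StrongDual ℝ X₁) (φ : ℕ → X₂) (m : ℕ → ℝ)
    (hbesselψ : ∀ f : X₁, ∃ s : ℝ,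
      HasSum (fun k => |ψ k f| ^ p.toReal) s ∧ s ^ (1 / p.toReal) ≤ B₁ * ‖f‖)
    (hbesselφ : ∀ h : StrongDual ℝ X₂, ∃ s : ℝ,
      HasSum (fun k => |h (φ k)| ^ q.toReal) s ∧ s ^ (1 / q.toReal) ≤ B₂ * ‖h‖)
    (t : ℝ) (hmr : HasSum (fun k => |m k| ^ r) t)
    (M : X₁ →L[ℝ] X₂)
    (hM : ∀ f : X₁, HasSum (fun k => (m k * ψ k f) • φ k) (M f)) :
    ∃ (E : X₁ →L[ℝ] lp (fun _ : ℕ => ℝ) p)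
      (D : lp (fun _ : ℕ => ℝ) p →L[ℝ] lp (fun _ : ℕ => ℝ) p)
      (F : lp (fun _ : ℕ => ℝ) p →L[ℝ] X₂),
      (∀ ξ : lp (fun _ : ℕ => ℝ) p, ∀ k : ℕ, (D ξ : ℕ → ℝ) k = m k * (ξ : ℕ → ℝ) k) ∧
      M = F.comp (D.comp E) ∧
      ‖E‖ * t ^ (1 / r) * ‖F‖ ≤ B₁ * B₂ * t ^ (1 / r) := by
  classical
  -- exponent arithmetic
  have hp0 : p ≠ 0 := (zero_lt_one.trans hp).ne'
  have hpt0 : 0 < p.toReal := ENNReal.toReal_pos hp0 hpt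
  have hpt1 : 1 < p.toReal := by
    rw [← ENNReal.toReal_one]
    exact (ENNReal.toReal_lt_toReal ENNReal.one_ne_top hpt).mpr hp
  have hq0 : q ≠ 0 := by
    rintro rfl
    rw [one_div, one_div, ENNReal.inv_zero] at hpq
    simp at hpq
  have hqtop : q ≠ ∞ := by
    rintro rfl
    rw [one_div, one_div, ENNReal.inv_top, add_zero, ENNReal.inv_eq_one] at hpq
    exact hp.ne' hpq
  have hconj : Real.HolderConjugate p.toReal q.toReal := by
    refine Real.holderConjugate_iff.mpr ⟨hpt1, ?_⟩
    have h1 : (1 / p : ℝ≥0∞) ≠ ∞ := by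
      simp [one_div, ENNReal.inv_ne_top, hp0]
    have h2 : (1 / q : ℝ≥0∞) ≠ ∞ := by
      simp [one_div, ENNReal.inv_ne_top, hq0]
    have := congrArg ENNReal.toReal hpq
    rw [ENNReal.toReal_add h1 h2] at this
    simpa [one_div, ENNReal.toReal_inv] using this
  have hqt0 : 0 < q.toReal := hconj.symm.pos
  have ht0 : 0 ≤ t := hmr.nonneg fun k => Real.rpow_nonneg (abs_nonneg _) _
  -- the symbol is bounded by t ^ (1/r)
  set C : ℝ := t ^ (1 / r) with hC
  have hC0 : 0 ≤ C := Real.rpow_nonneg ht0 _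
  have hmC : ∀ k, |m k| ≤ C := by
    intro k
    have h1 : |m k| ^ r ≤ t :=
      le_hasSum hmr k fun j _ => Real.rpow_nonneg (abs_nonneg _) _
    have h2 : (|m k| ^ r) ^ (1 / r) ≤ t ^ (1 / r) :=
      Real.rpow_le_rpow (Real.rpow_nonneg (abs_nonneg _) _) h1 (by positivity)
    rwa [← Real.rpow_mul (abs_nonneg _), mul_one_div, div_self hr.ne', Real.rpow_one] at h2
  -- the analysis operator E
  have hψmem : ∀ f : X₁, Memℓp (fun k => ψ k f) p := by
    intro f
    obtain ⟨s, hs, _⟩ := hbesselψ f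
    exact memℓp_gen (by simpa [Real.norm_eq_abs] using hs.summable)
  have hEnorm : ∀ f : X₁, ‖(⟨fun k => ψ k f, hψmem f⟩ : lp (fun _ : ℕ => ℝ) p)‖ ≤ B₁ * ‖f‖ := by
    intro f
    obtain ⟨s, hs, hsb⟩ := hbesselψ f
    rw [lp.norm_eq_tsum_rpow hpt0]
    have : (∑' k, ‖(fun k => ψ k f) k‖ ^ p.toReal) = s := by
      simpa [Real.norm_eq_abs] using hs.tsum_eq
    rw [show (fun k : ℕ => ‖(⟨fun k => ψ k f, hψmem f⟩ : lp (fun _ : ℕ => ℝ) p) k‖ ^ p.toReal)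
        = fun k => ‖(fun k => ψ k f) k‖ ^ p.toReal from rfl, this]
    exact hsb
  let Elin : X₁ →ₗ[ℝ] lp (fun _ : ℕ => ℝ) p :=
    { toFun := fun f => ⟨fun k => ψ k f, hψmem f⟩
      map_add' := fun f g => by ext k; simp; rfl
      map_smul' := fun c f => by ext k; simp }
  let E : X₁ →L[ℝ] lp (fun _ : ℕ => ℝ) p := Elin.mkContinuous B₁ hEnorm
  -- the diagonal operator D
  have hDmem : ∀ ξ : lp (fun _ : ℕ => ℝ) p, Memℓp (fun k => m k * (ξ : ℕ → ℝ) k) p := by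
    intro ξ
    apply memℓp_gen
    have hsum : Summable (fun k => C ^ p.toReal * ‖(ξ : ℕ → ℝ) k‖ ^ p.toReal) :=
      ((lp.memℓp ξ).summable hpt0).mul_left _
    refine Summable.of_nonneg_of_le (fun k => by positivity) (fun k => ?_) hsum
    rw [← Real.mul_rpow hC0 (norm_nonneg _)]
    refine Real.rpow_le_rpow (norm_nonneg _) ?_ hpt0.le
    rw [Real.norm_eq_abs, Real.norm_eq_abs, abs_mul]
    exact mul_le_mul_of_nonneg_right (hmC k) (abs_nonneg _)
  have hDnorm : ∀ ξ : lp (fun _ : ℕ => ℝ) p,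
      ‖(⟨fun k => m k * (ξ : ℕ → ℝ) k, hDmem ξ⟩ : lp (fun _ : ℕ => ℝ) p)‖ ≤ C * ‖ξ‖ := by
    intro ξ
    refine lp.norm_le_of_forall_sum_le hpt0 (by positivity) (fun s => ?_)
    have h1 : ∀ k ∈ s, ‖m k * (ξ : ℕ → ℝ) k‖ ^ p.toReal
        ≤ C ^ p.toReal * ‖(ξ : ℕ → ℝ) k‖ ^ p.toReal := by
      intro k _
      rw [← Real.mul_rpow hC0 (norm_nonneg _)]
      refine Real.rpow_le_rpow (norm_nonneg _) ?_ hpt0.le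
      rw [Real.norm_eq_abs, Real.norm_eq_abs, abs_mul]
      exact mul_le_mul_of_nonneg_right (hmC k) (abs_nonneg _)
    calc ∑ k ∈ s, ‖(⟨fun k => m k * (ξ : ℕ → ℝ) k, hDmem ξ⟩ : lp (fun _ : ℕ => ℝ) p) k‖ ^ p.toReal
        = ∑ k ∈ s, ‖m k * (ξ : ℕ → ℝ) k‖ ^ p.toReal := rfl
      _ ≤ ∑ k ∈ s, C ^ p.toReal * ‖(ξ : ℕ → ℝ) k‖ ^ p.toReal := Finset.sum_le_sum h1
      _ = C ^ p.toReal * ∑ k ∈ s, ‖(ξ : ℕ → ℝ) k‖ ^ p.toReal := by rw [Finset.mul_sum]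
      _ ≤ C ^ p.toReal * ‖ξ‖ ^ p.toReal := by
          exact mul_le_mul_of_nonneg_left (lp.sum_rpow_le_norm_rpow hpt0 ξ s) (by positivity)
      _ = (C * ‖ξ‖) ^ p.toReal := (Real.mul_rpow hC0 (norm_nonneg _)).symm
  let Dlin : lp (fun _ : ℕ => ℝ) p →ₗ[ℝ] lp (fun _ : ℕ => ℝ) p :=
    { toFun := fun ξ => ⟨fun k => m k * (ξ : ℕ → ℝ) k, hDmem ξ⟩
      map_add' := fun ξ η => by ext k; simp [mul_add]; rfl
      map_smul' := fun c ξ => by ext k; simp; ring }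
  let D : lp (fun _ : ℕ => ℝ) p →L[ℝ] lp (fun _ : ℕ => ℝ) p := Dlin.mkContinuous C hDnorm
  -- the key Hölder estimate for finite sections of the synthesis operator
  have hkey : ∀ (ξ : ℕ → ℝ) (s : Finset ℕ),
      ‖∑ k ∈ s, ξ k • φ k‖ ≤ B₂ * (∑ k ∈ s, |ξ k| ^ p.toReal) ^ (1 / p.toReal) := by
    intro ξ s
    have hA0 : (0:ℝ) ≤ (∑ k ∈ s, |ξ k| ^ p.toReal) ^ (1 / p.toReal) := by positivity
    refine NormedSpace.norm_le_dual_bound ℝ _ (by positivity) (fun h => ?_)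
    obtain ⟨s₂, hs₂, hs₂b⟩ := hbesselφ h
    have hs₂0 : (0:ℝ) ≤ ∑ k ∈ s, |h (φ k)| ^ q.toReal := by positivity
    have h1 : h (∑ k ∈ s, ξ k • φ k) = ∑ k ∈ s, ξ k * h (φ k) := by
      rw [map_sum]; simp [smul_eq_mul]
    have h2 : |∑ k ∈ s, ξ k * h (φ k)| ≤ ∑ k ∈ s, |ξ k| * |h (φ k)| := by
      refine (Finset.abs_sum_le_sum_abs _ _).trans ?_
      exact le_of_eq (Finset.sum_congr rfl fun k _ => abs_mul _ _)
    have h3 := Real.inner_le_Lp_mul_Lq s (fun k => |ξ k|) (fun k => |h (φ k)|) hconj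
    simp only [abs_abs] at h3
    have h4 : (∑ k ∈ s, |h (φ k)| ^ q.toReal) ^ (1 / q.toReal) ≤ B₂ * ‖h‖ := by
      refine le_trans ?_ hs₂b
      refine Real.rpow_le_rpow hs₂0 ?_ (by positivity)
      exact sum_le_hasSum s (fun k _ => Real.rpow_nonneg (abs_nonneg _) _) hs₂
    calc ‖h (∑ k ∈ s, ξ k • φ k)‖ = |∑ k ∈ s, ξ k * h (φ k)| := by
          rw [h1, Real.norm_eq_abs]
      _ ≤ ∑ k ∈ s, |ξ k| * |h (φ k)| := h2
      _ ≤ (∑ k ∈ s, |ξ k| ^ p.toReal) ^ (1 / p.toReal) *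
            (∑ k ∈ s, |h (φ k)| ^ q.toReal) ^ (1 / q.toReal) := h3
      _ ≤ (∑ k ∈ s, |ξ k| ^ p.toReal) ^ (1 / p.toReal) * (B₂ * ‖h‖) :=
          mul_le_mul_of_nonneg_left h4 hA0
      _ = B₂ * (∑ k ∈ s, |ξ k| ^ p.toReal) ^ (1 / p.toReal) * ‖h‖ := by ring
  -- summability of the synthesis series
  have hFsum : ∀ ξ : lp (fun _ : ℕ => ℝ) p, Summable (fun k => (ξ : ℕ → ℝ) k • φ k) := by
    intro ξ
    rw [summable_iff_vanishing_norm]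
    intro ε hε
    have hξsum : Summable (fun k => |(ξ : ℕ → ℝ) k| ^ p.toReal) := by
      simpa [Real.norm_eq_abs] using (lp.memℓp ξ).summable hpt0
    have hδ : (0:ℝ) < (ε / (B₂ + 1)) ^ p.toReal := by positivity
    obtain ⟨s, hs⟩ := summable_iff_vanishing_norm.mp hξsum _ hδ
    refine ⟨s, fun u hu => ?_⟩
    have h1 := hs u hu
    have h2 : ∑ k ∈ u, |(ξ : ℕ → ℝ) k| ^ p.toReal ≤ (ε / (B₂ + 1)) ^ p.toReal := by
      have := le_abs_self (∑ k ∈ u, |(ξ : ℕ → ℝ) k| ^ p.toReal)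
      rw [← Real.norm_eq_abs] at this
      exact this.trans h1.le
    have h3 : (∑ k ∈ u, |(ξ : ℕ → ℝ) k| ^ p.toReal) ^ (1 / p.toReal) ≤ ε / (B₂ + 1) := by
      have := Real.rpow_le_rpow (by positivity) h2 (by positivity : (0:ℝ) ≤ 1 / p.toReal)
      rwa [← Real.rpow_mul (by positivity), mul_one_div, div_self hpt0.ne',
        Real.rpow_one] at this
    calc ‖∑ k ∈ u, (ξ : ℕ → ℝ) k • φ k‖
        ≤ B₂ * (∑ k ∈ u, |(ξ : ℕ → ℝ) k| ^ p.toReal) ^ (1 / p.toReal) := hkey _ u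
      _ ≤ B₂ * (ε / (B₂ + 1)) := mul_le_mul_of_nonneg_left h3 hB₂.le
      _ < ε := by
          rw [mul_div_assoc']
          rw [div_lt_iff₀ (by linarith)]
          nlinarith
  -- bound for the synthesis operator
  have hFnorm : ∀ ξ : lp (fun _ : ℕ => ℝ) p, ‖∑' k, (ξ : ℕ → ℝ) k • φ k‖ ≤ B₂ * ‖ξ‖ := by
    intro ξ
    have hhs := (hFsum ξ).hasSum
    have htend : Filter.Tendsto (fun s : Finset ℕ => ‖∑ k ∈ s, (ξ : ℕ → ℝ) k • φ k‖)
        Filter.atTop (nhds ‖∑' k, (ξ : ℕ → ℝ) k • φ k‖) := hhs.norm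
    refine le_of_tendsto' htend (fun s => ?_)
    refine (hkey _ s).trans ?_
    have h1 : (∑ k ∈ s, |(ξ : ℕ → ℝ) k| ^ p.toReal) ^ (1 / p.toReal) ≤ ‖ξ‖ := by
      have h2 : ∑ k ∈ s, |(ξ : ℕ → ℝ) k| ^ p.toReal ≤ ‖ξ‖ ^ p.toReal := by
        simpa [Real.norm_eq_abs] using lp.sum_rpow_le_norm_rpow hpt0 ξ s
      have := Real.rpow_le_rpow (by positivity) h2 (by positivity : (0:ℝ) ≤ 1 / p.toReal)
      rwa [← Real.rpow_mul (norm_nonneg _), mul_one_div, div_self hpt0.ne',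
        Real.rpow_one] at this
    exact mul_le_mul_of_nonneg_left h1 hB₂.le
  let Flin : lp (fun _ : ℕ => ℝ) p →ₗ[ℝ] X₂ :=
    { toFun := fun ξ => ∑' k, (ξ : ℕ → ℝ) k • φ k
      map_add' := fun ξ η => by
        have : (fun k => ((ξ + η : lp (fun _ : ℕ => ℝ) p) : ℕ → ℝ) k • φ k)
            = fun k => (ξ : ℕ → ℝ) k • φ k + (η : ℕ → ℝ) k • φ k := by
          funext k
          rw [lp.coeFn_add]
          simp [add_smul]
        simp only [this]
        exact Summable.tsum_add (hFsum ξ) (hFsum η)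
      map_smul' := fun c ξ => by
        have : (fun k => ((c • ξ : lp (fun _ : ℕ => ℝ) p) : ℕ → ℝ) k • φ k)
            = fun k => c • ((ξ : ℕ → ℝ) k • φ k) := by
          funext k
          rw [lp.coeFn_smul]
          simp [smul_smul]
        simp only [this, RingHom.id_apply]
        exact Summable.tsum_const_smul c (hFsum ξ) }
  let F : lp (fun _ : ℕ => ℝ) p →L[ℝ] X₂ := Flin.mkContinuous B₂ hFnorm
  refine ⟨E, D, F, fun ξ k => rfl, ?_, ?_⟩
  · ext f
    have h1 : F (D (E f)) = ∑' k, (m k * ψ k f) • φ k := rfl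
    rw [ContinuousLinearMap.comp_apply, ContinuousLinearMap.comp_apply, h1]
    exact ((hM f).tsum_eq).symm
  · have hE : ‖E‖ ≤ B₁ := Elin.mkContinuous_norm_le hB₁.le hEnorm
    have hF : ‖F‖ ≤ B₂ := Flin.mkContinuous_norm_le hB₂.le hFnorm
    have htr0 : (0:ℝ) ≤ t ^ (1 / r) := Real.rpow_nonneg ht0 _
    calc ‖E‖ * t ^ (1 / r) * ‖F‖ ≤ B₁ * t ^ (1 / r) * B₂ := by
          refine mul_le_mul ?_ hF (norm_nonneg _) (by positivity)
          exact mul_le_mul_of_nonneg_right hE htr0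
      _ = B₁ * B₂ * t ^ (1 / r) := by ring
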